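/- arXiv:1011.6302 — 2 statements merged into one kernel-verified Lean document; each statement's English description precedes it below -/
import Mathlib

section
/- Let ψ : {0,1}ⁿ → ℝ be a pseudo-Boolean function. For every x ∈ ℝⁿ, L_ψ(x) = ψ(0) + Σ_{∅≠A⊆[n]} a_{ψ^d}(A)·max_{i∈A} x_i, where ψ^d is the dual of ψ and a_{ψ^d} its Möbius transform. -/
open Finset

/-- The indicator tuple `1_A` of a subset `A ⊆ [n]`. -/
def ind {n : ℕ} (A : Finset (Fin n)) : Fin n → ℝ := fun i => if i ∈ A then 1 else 0

/-- The Möbius transform of a pseudo-Boolean function (viewed as a set function). -/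
def mobius {n : ℕ} (ψ : Finset (Fin n) → ℝ) (A : Finset (Fin n)) : ℝ :=
  ∑ B ∈ A.powerset, (-1 : ℝ) ^ (A.card - B.card) * ψ B

/-- `min_{i ∈ A} x i` (with value `0` for `A = ∅`). -/
def minOnF {n : ℕ} (A : Finset (Fin n)) (x : Fin n → ℝ) : ℝ :=
  if h : A.Nonempty then A.inf' h x else 0

/-- The Lovász extension of a pseudo-Boolean function `ψ` (viewed as a set function):
`L_ψ(x) = a_ψ(∅) + Σ_{∅ ≠ A ⊆ [n]} a_ψ(A) · min_{i ∈ A} x_i`. -/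
def Lov {n : ℕ} (ψ : Finset (Fin n) → ℝ) (x : Fin n → ℝ) : ℝ :=
  mobius ψ ∅ + ∑ A : Finset (Fin n), mobius ψ A * minOnF A x

/-- `x ∈ ℝⁿ_σ`, i.e. `x_{σ(1)} ≤ ⋯ ≤ x_{σ(n)}`. -/
def inRσ {n : ℕ} (σ : Equiv.Perm (Fin n)) (x : Fin n → ℝ) : Prop :=
  ∀ i j : Fin n, i ≤ j → x (σ i) ≤ x (σ j)

/-- `A_σ^↑(k) = {σ(j) : j ≥ k}` (0-indexed; `Aup σ n = ∅`). -/
def Aup {n : ℕ} (σ : Equiv.Perm (Fin n)) (k : ℕ) : Finset (Fin n) :=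
  (Finset.univ.filter fun j : Fin n => k ≤ (j : ℕ)).image σ

/-- `A_σ^↓(k) = {σ(j) : j < k}` (0-indexed; `Adown σ 0 = ∅`). -/
def Adown {n : ℕ} (σ : Equiv.Perm (Fin n)) (k : ℕ) : Finset (Fin n) :=
  (Finset.univ.filter fun j : Fin n => (j : ℕ) < k).image σ

/-- The dual `ψ^d` of a pseudo-Boolean function `ψ` (as a set function):
`ψ^d(1_A) = ψ(0) + ψ(1) − ψ(1 − 1_A)`. -/
def dualPB {n : ℕ} (ψ : Finset (Fin n) → ℝ) : Finset (Fin n) → ℝ :=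
  fun A => ψ ∅ + ψ Finset.univ - ψ Aᶜ

/-- `max_{i ∈ A} x i` (with value `0` for `A = ∅`). -/
def maxOnF {n : ℕ} (A : Finset (Fin n)) (x : Fin n → ℝ) : ℝ :=
  if h : A.Nonempty then A.sup' h x else 0

lemma neg_one_pow_sub' {k m : ℕ} (h : k ≤ m) : (-1:ℝ)^(m-k) = (-1:ℝ)^m * (-1:ℝ)^k := by
  have h2 : (-1:ℝ)^k * (-1:ℝ)^k = 1 := by
    rw [← pow_add]; exact Even.neg_one_pow ⟨k, rfl⟩
  have : (-1:ℝ)^(m-k) * ((-1:ℝ)^k * (-1:ℝ)^k) = (-1:ℝ)^m * (-1:ℝ)^k := by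
    rw [← mul_assoc, ← pow_add, Nat.sub_add_cancel h]
  rwa [h2, mul_one] at this

lemma sum_neg_one_pow' {n : ℕ} (S : Finset (Fin n)) :
    ∑ B ∈ S.powerset, (-1 : ℝ) ^ B.card = if S = ∅ then 1 else 0 := by
  have h : ((∑ m ∈ S.powerset, (-1 : ℤ) ^ m.card : ℤ) : ℝ)
      = ∑ B ∈ S.powerset, (-1:ℝ)^B.card := by push_cast; rfl
  rw [← h, Finset.sum_powerset_neg_one_pow_card]
  split <;> norm_num

lemma powerset_sum' {n : ℕ} (A : Finset (Fin n)) (f : Finset (Fin n) → ℝ) :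
    ∑ B ∈ A.powerset, f B = ∑ B : Finset (Fin n), if B ⊆ A then f B else 0 := by
  rw [← Finset.sum_filter]
  apply Finset.sum_congr _ (fun _ _ => rfl)
  ext B; simp

lemma maxOn_empty {n : ℕ} (x : Fin n → ℝ) : maxOnF (∅ : Finset (Fin n)) x = 0 := by
  simp [maxOnF]

/-- min-max inclusion-exclusion -/
lemma minOn_eq_sum {n : ℕ} (C : Finset (Fin n)) (x : Fin n → ℝ) :
    minOnF C x = ∑ B ∈ C.powerset, (-1 : ℝ) ^ (B.card + 1) * maxOnF B x := by
  by_cases hC : C.Nonempty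
  · obtain ⟨c, hc, hmin⟩ := Finset.exists_mem_eq_inf' hC x
    have hxc : ∀ i ∈ C, x c ≤ x i := fun i hi => hmin ▸ Finset.inf'_le x hi
    have hcC' : c ∉ C.erase c := Finset.notMem_erase c C
    have hCrw : C = insert c (C.erase c) := (Finset.insert_erase hc).symm
    rw [minOnF, dif_pos hC, hmin, hCrw, Finset.sum_powerset_insert hcC',
      ← Finset.sum_add_distrib]
    have key : ∀ B ∈ (C.erase c).powerset,
        (-1:ℝ)^(B.card+1) * maxOnF B x + (-1:ℝ)^((insert c B).card+1) * maxOnF (insert c B) x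
          = if B = ∅ then x c else 0 := by
      intro B hB
      have hBsub : B ⊆ C.erase c := Finset.mem_powerset.mp hB
      have hcB : c ∉ B := fun h => hcC' (hBsub h)
      rw [Finset.card_insert_of_notMem hcB]
      by_cases hBe : B = ∅
      · subst hBe
        simp [maxOnF, Finset.sup'_singleton]
      · have hBne : B.Nonempty := Finset.nonempty_iff_ne_empty.mpr hBe
        have hmax : maxOnF (insert c B) x = maxOnF B x := by
          rw [maxOnF, maxOnF, dif_pos hBne, dif_pos (Finset.insert_nonempty c B),
            Finset.sup'_insert (H := hBne)]
          have : x c ≤ B.sup' hBne x := by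
            obtain ⟨b, hb⟩ := hBne
            exact le_trans (hxc b (Finset.mem_of_mem_erase (hBsub hb)))
              (Finset.le_sup' x hb)
          simp [sup_of_le_right this, max_eq_right this]
        rw [hmax, if_neg hBe, pow_succ, pow_succ]
        ring
    rw [Finset.sum_congr rfl key, Finset.sum_ite_eq' (C.erase c).powerset ∅ (fun _ => x c),
      if_pos (Finset.empty_mem_powerset _)]
  · have : C = ∅ := by
      rw [Finset.not_nonempty_iff_eq_empty] at hC; exact hC
    subst this
    simp [minOnF, maxOn_empty]

def complEquiv (n : ℕ) : Finset (Fin n) ≃ Finset (Fin n) :=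
  ⟨compl, compl, compl_compl, compl_compl⟩

lemma sum_superset_neg_one_pow {n : ℕ} (F : Finset (Fin n)) :
    ∑ A : Finset (Fin n), (if F ⊆ A then (-1 : ℝ) ^ A.card else 0)
      = if F = Finset.univ then (-1 : ℝ) ^ n else 0 := by
  have e : ∑ A : Finset (Fin n), (if F ⊆ Aᶜ then (-1:ℝ)^Aᶜ.card else 0)
      = ∑ A : Finset (Fin n), (if F ⊆ A then (-1:ℝ)^A.card else 0) :=
    Fintype.sum_equiv (complEquiv n) _ _ (fun A => rfl)
  rw [← e]
  have step : ∀ A : Finset (Fin n),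
      (if F ⊆ Aᶜ then (-1:ℝ)^Aᶜ.card else 0)
        = if A ⊆ Fᶜ then (-1:ℝ)^n * (-1:ℝ)^A.card else 0 := by
    intro A
    have hiff : F ⊆ Aᶜ ↔ A ⊆ Fᶜ := by
      constructor <;> intro h <;> exact Finset.subset_compl_comm.mp h
    by_cases h : A ⊆ Fᶜ
    · rw [if_pos (hiff.mpr h), if_pos h, Finset.card_compl,
        neg_one_pow_sub' (by simpa using Finset.card_le_card A.subset_univ), Fintype.card_fin]
    · rw [if_neg (fun hh => h (hiff.mp hh)), if_neg h]
  rw [Finset.sum_congr rfl (fun A _ => step A), ← powerset_sum', ← Finset.mul_sum,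
    sum_neg_one_pow']
  by_cases h : F = Finset.univ
  · simp [h]
  · have : Fᶜ ≠ ∅ := by
      simp only [ne_eq, Finset.compl_eq_empty_iff]
      exact h
    rw [if_neg this, if_neg h, mul_zero]

lemma sum_mobius_superset {n : ℕ} (ψ : Finset (Fin n) → ℝ) (B : Finset (Fin n)) :
    ∑ A : Finset (Fin n), (if B ⊆ A then mobius ψ A else 0)
      = ∑ E ∈ B.powerset, (-1:ℝ)^E.card * ψ Eᶜ := by
  have step1 : ∀ A : Finset (Fin n),
      (if B ⊆ A then mobius ψ A else 0)
        = ∑ D : Finset (Fin n),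
            (if B ⊆ A ∧ D ⊆ A then ((-1:ℝ)^D.card * ψ D) * (-1:ℝ)^A.card else 0) := by
    intro A
    by_cases h : B ⊆ A
    · rw [if_pos h, mobius, powerset_sum']
      apply Finset.sum_congr rfl
      intro D _
      by_cases hD : D ⊆ A
      · rw [if_pos hD, if_pos ⟨h, hD⟩, neg_one_pow_sub' (Finset.card_le_card hD)]
        ring
      · rw [if_neg hD, if_neg (fun hh => hD hh.2)]
    · rw [if_neg h]
      symm
      apply Finset.sum_eq_zero
      intro D _
      rw [if_neg (fun hh => h hh.1)]
  rw [Finset.sum_congr rfl (fun A _ => step1 A), Finset.sum_comm]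
  have step2 : ∀ D : Finset (Fin n),
      (∑ A : Finset (Fin n), if B ⊆ A ∧ D ⊆ A then ((-1:ℝ)^D.card * ψ D) * (-1:ℝ)^A.card else 0)
        = ((-1:ℝ)^D.card * ψ D) * (if B ∪ D = Finset.univ then (-1:ℝ)^n else 0) := by
    intro D
    rw [← sum_superset_neg_one_pow (B ∪ D), Finset.mul_sum]
    apply Finset.sum_congr rfl
    intro A _
    have : (B ⊆ A ∧ D ⊆ A) ↔ B ∪ D ⊆ A := by
      rw [Finset.union_subset_iff]
    by_cases h : B ∪ D ⊆ A
    · rw [if_pos (this.mpr h), if_pos h]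
    · rw [if_neg (fun hh => h (this.mp hh)), if_neg h, mul_zero]
  rw [Finset.sum_congr rfl (fun D _ => step2 D)]
  have e : ∑ D : Finset (Fin n),
        ((-1:ℝ)^Dᶜ.card * ψ Dᶜ) * (if B ∪ Dᶜ = Finset.univ then (-1:ℝ)^n else 0)
      = ∑ D : Finset (Fin n),
        ((-1:ℝ)^D.card * ψ D) * (if B ∪ D = Finset.univ then (-1:ℝ)^n else 0) :=
    Fintype.sum_equiv (complEquiv n) _ _ (fun A => rfl)
  rw [← e, powerset_sum']
  apply Finset.sum_congr rfl
  intro E _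
  have hiff : B ∪ Eᶜ = Finset.univ ↔ E ⊆ B := by
    constructor
    · intro h i hi
      have : i ∈ B ∪ Eᶜ := h ▸ Finset.mem_univ i
      rcases Finset.mem_union.mp this with h' | h'
      · exact h'
      · exact absurd hi (Finset.mem_compl.mp h')
    · intro h
      apply Finset.eq_univ_of_forall
      intro i
      rw [Finset.mem_union, Finset.mem_compl]
      by_cases hi : i ∈ E
      · exact Or.inl (h hi)
      · exact Or.inr hi
  by_cases h : E ⊆ B
  · rw [if_pos h, if_pos (hiff.mpr h), Finset.card_compl, Fintype.card_fin,
      neg_one_pow_sub' (by simpa using Finset.card_le_card E.subset_univ)]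
    have h2 : (-1:ℝ)^n * (-1:ℝ)^n = 1 := by
      rw [← pow_add]; exact Even.neg_one_pow ⟨n, rfl⟩
    calc (-1:ℝ)^n * (-1:ℝ)^E.card * ψ Eᶜ * (-1:ℝ)^n
        = ((-1:ℝ)^n * (-1:ℝ)^n) * ((-1:ℝ)^E.card * ψ Eᶜ) := by ring
      _ = (-1:ℝ)^E.card * ψ Eᶜ := by rw [h2, one_mul]
  · rw [if_neg h, if_neg (fun hh => h (hiff.mp hh)), mul_zero]

lemma mobius_dualPB {n : ℕ} (ψ : Finset (Fin n) → ℝ) (B : Finset (Fin n)) (hB : B ≠ ∅) :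
    mobius (dualPB ψ) B = (-1:ℝ)^(B.card+1) * ∑ E ∈ B.powerset, (-1:ℝ)^E.card * ψ Eᶜ := by
  unfold mobius dualPB
  have step : ∀ E ∈ B.powerset,
      (-1:ℝ)^(B.card - E.card) * (ψ ∅ + ψ Finset.univ - ψ Eᶜ)
        = (ψ ∅ + ψ Finset.univ) * (-1:ℝ)^B.card * (-1:ℝ)^E.card
          + (-1:ℝ)^(B.card+1) * ((-1:ℝ)^E.card * ψ Eᶜ) := by
    intro E hE
    rw [neg_one_pow_sub' (Finset.card_le_card (Finset.mem_powerset.mp hE)), pow_succ]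
    ring
  rw [Finset.sum_congr rfl step, Finset.sum_add_distrib, ← Finset.mul_sum, ← Finset.mul_sum,
    sum_neg_one_pow', if_neg hB, mul_zero, zero_add]

/-- `L_ψ(x) = ψ(0) + Σ_{∅≠A⊆[n]} a_{ψ^d}(A)·max_{i∈A} x_i`.
(The term for `A = ∅` vanishes since `maxOn ∅ x = 0`.) -/
theorem stmt1 {n : ℕ} (ψ : Finset (Fin n) → ℝ) (x : Fin n → ℝ) :
    Lov ψ x = ψ ∅ + ∑ A : Finset (Fin n), mobius (dualPB ψ) A * maxOnF A x := by
  have hm0 : mobius ψ ∅ = ψ ∅ := by simp [mobius]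
  rw [Lov, hm0]
  congr 1
  calc ∑ A : Finset (Fin n), mobius ψ A * minOnF A x
      = ∑ A : Finset (Fin n), ∑ B : Finset (Fin n),
          (if B ⊆ A then mobius ψ A * ((-1:ℝ)^(B.card+1) * maxOnF B x) else 0) := by
        apply Finset.sum_congr rfl
        intro A _
        rw [minOn_eq_sum, Finset.mul_sum, powerset_sum']
    _ = ∑ B : Finset (Fin n), ∑ A : Finset (Fin n),
          (if B ⊆ A then mobius ψ A else 0) * ((-1:ℝ)^(B.card+1) * maxOnF B x) := by
        rw [Finset.sum_comm]
        apply Finset.sum_congr rfl (fun B _ => Finset.sum_congr rfl (fun A _ => ?_))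
        by_cases h : B ⊆ A
        · rw [if_pos h, if_pos h]
        · rw [if_neg h, if_neg h, zero_mul]
    _ = ∑ A : Finset (Fin n), mobius (dualPB ψ) A * maxOnF A x := by
        apply Finset.sum_congr rfl
        intro B _
        rw [← Finset.sum_mul]
        by_cases hB : B = ∅
        · subst hB
          simp [maxOn_empty]
        · rw [sum_mobius_superset, mobius_dualPB ψ B hB]
          ring
end

section
/- Let I ⊆ ℝ₊ = [0,∞) be a real interval containing 0 and let f : Iⁿ → ℝ. Then the following are equivalent: (i) f is comonotonically modular; (ii) f is invariant under horizontal min-differences; (iii) there exists a function g : Iⁿ → ℝ such that for every permutation σ of [n] and every x ∈ Iⁿ ∩ ℝⁿ_σ, f(x) = g(0,…,0) + Σ_{i=1}^{n} (g(x_{σ(i)}·1_{A_σ^↑(i)}) − g(x_{σ(i)}·1_{A_σ^↑(i+1)})). Moreover, in (iii) one can choose g = f. -/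
open Finset

/-- `f` is comonotonically modular on `Iⁿ`:
`f(x) + f(x′) = f(x ∧ x′) + f(x ∨ x′)` for all comonotonic `x, x′ ∈ Iⁿ`. -/
def ComonModular {n : ℕ} (I : Set ℝ) (f : (Fin n → ℝ) → ℝ) : Prop :=
  ∀ σ : Equiv.Perm (Fin n), ∀ x y : Fin n → ℝ,
    (∀ i, x i ∈ I) → (∀ i, y i ∈ I) → inRσ σ x → inRσ σ y →
    f x + f y = f (fun i => min (x i) (y i)) + f (fun i => max (x i) (y i))

/-- `f` is invariant under horizontal min-differences on `Iⁿ` (`I ⊆ ℝ₊`):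
`f(x) − f(x ∧ c) = f([x]_c) − f([x]_c ∧ c)` for every `x ∈ Iⁿ` and `c ∈ I`. -/
def InvHMin {n : ℕ} (I : Set ℝ) (f : (Fin n → ℝ) → ℝ) : Prop :=
  ∀ x : Fin n → ℝ, (∀ i, x i ∈ I) → ∀ c ∈ I,
    f x - f (fun i => min (x i) c) =
      f (fun i => if x i ≤ c then 0 else x i) -
      f (fun i => min (if x i ≤ c then 0 else x i) c)

lemma mem_Aup {n : ℕ} (σ : Equiv.Perm (Fin n)) (k : ℕ) (i : Fin n) :
    i ∈ Aup σ k ↔ k ≤ ((σ.symm i : Fin n) : ℕ) := by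
  simp only [Aup, Finset.mem_image, Finset.mem_filter, Finset.mem_univ, true_and]
  constructor
  · rintro ⟨j, hj, rfl⟩; simpa using hj
  · intro h; exact ⟨σ.symm i, h, by simp⟩

lemma lowerSet_iff {n : ℕ} (σ : Equiv.Perm (Fin n)) (x : Fin n → ℝ) (hx : inRσ σ x)
    (p : ℝ → Prop) [DecidablePred p] (hp : ∀ a b : ℝ, a ≤ b → p b → p a) (j : Fin n) :
    p (x (σ j)) ↔ (j : ℕ) < (Finset.univ.filter fun j : Fin n => p (x (σ j))).card := by
  constructor
  · intro hj
    have hsub : Finset.Iic j ⊆ Finset.univ.filter fun i : Fin n => p (x (σ i)) := by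
      intro i hi
      simp only [Finset.mem_Iic] at hi
      simp only [Finset.mem_filter, Finset.mem_univ, true_and]
      exact hp _ _ (hx i j hi) hj
    have h := Finset.card_le_card hsub
    rw [Fin.card_Iic] at h
    omega
  · intro hj
    by_contra hpj
    have hsub : (Finset.univ.filter fun i : Fin n => p (x (σ i))) ⊆ Finset.Iio j := by
      intro i hi
      simp only [Finset.mem_filter, Finset.mem_univ, true_and] at hi
      simp only [Finset.mem_Iio]
      by_contra h
      push_neg at h
      exact hpj (hp _ _ (hx j i h) hi)
    have h := Finset.card_le_card hsub
    rw [Fin.card_Iio] at h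
    omega

lemma zero_mul_ind {n : ℕ} (A : Finset (Fin n)) :
    (fun j => (0:ℝ) * ind A j) = fun _ => (0:ℝ) := by
  funext j; ring

lemma trivial_formula {n : ℕ} (f : (Fin n → ℝ) → ℝ) (σ : Equiv.Perm (Fin n))
    (x : Fin n → ℝ) (hx : ∀ i, x i = 0) :
    f x = f (fun _ => 0) + ∑ i : Fin n,
      (f (fun j => x (σ i) * ind (Aup σ (i : ℕ)) j) -
       f (fun j => x (σ i) * ind (Aup σ ((i : ℕ) + 1)) j)) := by
  have hx0 : x = fun _ => 0 := funext hx
  have hterm : ∀ i : Fin n,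
      (f (fun j => x (σ i) * ind (Aup σ (i : ℕ)) j) -
       f (fun j => x (σ i) * ind (Aup σ ((i : ℕ) + 1)) j)) = 0 := by
    intro i
    rw [hx0]
    simp only [zero_mul_ind, sub_self]
  rw [Finset.sum_congr rfl (fun i _ => hterm i), Finset.sum_const_zero, hx0, add_zero]

lemma L2 {n : ℕ} (I : Set ℝ) (h0 : (0 : ℝ) ∈ I) (hIpos : I ⊆ Set.Ici (0 : ℝ))
    (f : (Fin n → ℝ) → ℝ) (hf : InvHMin I f) :
    ∀ σ : Equiv.Perm (Fin n), ∀ x : Fin n → ℝ, (∀ i, x i ∈ I) → inRσ σ x →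
      f x = f (fun _ => 0) + ∑ i : Fin n,
        (f (fun j => x (σ i) * ind (Aup σ (i : ℕ)) j) -
         f (fun j => x (σ i) * ind (Aup σ ((i : ℕ) + 1)) j)) := by
  intro σ
  suffices H : ∀ m : ℕ, ∀ x : Fin n → ℝ,
      (Finset.univ.filter fun i => x i ≠ 0).card ≤ m →
      (∀ i, x i ∈ I) → inRσ σ x →
      f x = f (fun _ => 0) + ∑ i : Fin n,
        (f (fun j => x (σ i) * ind (Aup σ (i : ℕ)) j) -
         f (fun j => x (σ i) * ind (Aup σ ((i : ℕ) + 1)) j)) by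
    intro x hxI hxs
    exact H _ x le_rfl hxI hxs
  intro m
  induction m with
  | zero =>
    intro x hcard _ _
    apply trivial_formula
    intro i
    by_contra h
    have : i ∈ Finset.univ.filter fun i => x i ≠ 0 := by simp [h]
    have := Finset.card_pos.mpr ⟨i, this⟩
    omega
  | succ m ih =>
    intro x hcard hxI hxs
    by_cases hx0 : ∀ i, x i = 0
    · exact trivial_formula f σ x hx0
    push_neg at hx0
    obtain ⟨i₁, hi₁⟩ := hx0
    have hVne : (Finset.univ.filter fun i => x i ≠ 0).Nonempty := ⟨i₁, by simp [hi₁]⟩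
    set c := (Finset.univ.filter fun i => x i ≠ 0).inf' hVne x with hc
    obtain ⟨i₀, hi₀mem, hi₀⟩ := Finset.exists_mem_eq_inf' hVne x
    simp only [Finset.mem_filter, Finset.mem_univ, true_and] at hi₀mem
    have hcI : c ∈ I := by rw [hc, hi₀]; exact hxI i₀
    have hc0 : 0 ≤ c := hIpos hcI
    have hcne : c ≠ 0 := by rw [hc, hi₀]; exact hi₀mem
    have hcpos : 0 < c := lt_of_le_of_ne hc0 (Ne.symm hcne)
    have hcmin : ∀ i, x i ≠ 0 → c ≤ x i := fun i hi =>
      Finset.inf'_le x (by simp [hi])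
    have hlt0 : ∀ i, x i < c → x i = 0 := by
      intro i hi
      by_contra h
      exact absurd (hcmin i h) (not_le.mpr hi)
    -- x' = [x]_c
    set x' := fun i => if x i ≤ c then 0 else x i with hx'
    have hx'I : ∀ i, x' i ∈ I := by
      intro i; rw [hx']; dsimp only
      split <;> [exact h0; exact hxI i]
    have hx'pos : ∀ i, x i ≤ c → x' i = 0 := by
      intro i h; simp [hx', h]
    have hx'gt : ∀ i, ¬ x i ≤ c → x' i = x i := by
      intro i h; simp [hx', h]
    have hx's : inRσ σ x' := by
      intro i j hij
      rw [hx']; dsimp only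
      split
      · split
        · exact le_rfl
        · next h2 => push_neg at h2; linarith
      · next h1 =>
        split
        · next h2 => exact absurd (le_trans (hxs i j hij) h2) h1
        · exact hxs i j hij
    have hcard' : (Finset.univ.filter fun i => x' i ≠ 0).card ≤ m := by
      have hss : (Finset.univ.filter fun i => x' i ≠ 0) ⊂
          (Finset.univ.filter fun i => x i ≠ 0) := by
        constructor
        · intro i hi
          simp only [Finset.mem_filter, Finset.mem_univ, true_and] at hi ⊢
          intro h
          apply hi
          apply hx'pos
          rw [h]; exact hc0
        · intro h
          have := h (by simp [hi₀mem] : i₀ ∈ _)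
          simp only [Finset.mem_filter, Finset.mem_univ, true_and] at this
          exact this (hx'pos i₀ (le_of_eq hi₀.symm))
      have := Finset.card_lt_card hss
      omega
    have hIH := ih x' hcard' hx'I hx's
    -- counts
    set t0 := (Finset.univ.filter fun j : Fin n => x (σ j) < c).card with ht0
    set t := (Finset.univ.filter fun j : Fin n => x (σ j) ≤ c).card with ht
    have hPt0 : ∀ j : Fin n, x (σ j) < c ↔ (j : ℕ) < t0 := by
      intro j
      exact lowerSet_iff σ x hxs (fun v => v < c) (fun a b hab hb => lt_of_le_of_lt hab hb) j
    have hPt : ∀ j : Fin n, x (σ j) ≤ c ↔ (j : ℕ) < t := by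
      intro j
      exact lowerSet_iff σ x hxs (fun v => v ≤ c) (fun a b hab hb => le_trans hab hb) j
    have ht0t : t0 ≤ t := by
      apply Finset.card_le_card
      intro j hj
      simp only [Finset.mem_filter, Finset.mem_univ, true_and] at hj ⊢
      exact le_of_lt hj
    have htn : t ≤ n := by
      have := Finset.card_filter_le (Finset.univ : Finset (Fin n)) (fun j => x (σ j) ≤ c)
      simpa using this
    -- G
    set G : ℕ → ℝ := fun m => f (fun j => c * ind (Aup σ m) j) with hG
    -- identities
    have hE1 : (fun i => min (x i) c) = (fun j => c * ind (Aup σ t0) j) := by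
      funext i
      have key : x i < c ↔ (((σ.symm i : Fin n)) : ℕ) < t0 := by
        have := hPt0 (σ.symm i); simpa using this
      simp only [ind, mem_Aup]
      by_cases h : t0 ≤ ((σ.symm i : Fin n) : ℕ)
      · have : ¬ x i < c := by rw [key]; omega
        push_neg at this
        simp [h, min_eq_right this]
      · have hxi : x i < c := by rw [key]; omega
        have := hlt0 i hxi
        simp [h, this, min_eq_left hc0]
    have hE2 : (fun i => min (x' i) c) = (fun j => c * ind (Aup σ t) j) := by
      funext i
      have key : x i ≤ c ↔ (((σ.symm i : Fin n)) : ℕ) < t := by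
        have := hPt (σ.symm i); simpa using this
      simp only [ind, mem_Aup]
      by_cases h : t ≤ ((σ.symm i : Fin n) : ℕ)
      · have hxc : ¬ x i ≤ c := by rw [key]; omega
        rw [hx'gt i hxc]
        push_neg at hxc
        simp [h, min_eq_right hxc.le]
      · have hxc : x i ≤ c := by rw [key]; omega
        rw [hx'pos i hxc]
        simp [h, min_eq_left hc0]
    -- InvHMin
    have hinv := hf x hxI c hcI
    have hinv' : f x = G t0 + f x' - G t := by
      rw [hG]
      dsimp only
      rw [← hE1, ← hE2]
      have : f (fun i => if x i ≤ c then 0 else x i) = f x' := by rw [hx']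
      rw [← this]
      linarith [hinv]
    -- the sum difference
    have hterm : ∀ i : Fin n,
        ((f (fun j => x (σ i) * ind (Aup σ (i : ℕ)) j) -
          f (fun j => x (σ i) * ind (Aup σ ((i : ℕ) + 1)) j)) -
         (f (fun j => x' (σ i) * ind (Aup σ (i : ℕ)) j) -
          f (fun j => x' (σ i) * ind (Aup σ ((i : ℕ) + 1)) j)))
        = if t0 ≤ (i : ℕ) ∧ (i : ℕ) < t then G (i : ℕ) - G ((i : ℕ) + 1) else 0 := by
      intro i
      by_cases h1 : (i : ℕ) < t0
      · have hxi : x (σ i) = 0 := hlt0 _ ((hPt0 i).mpr h1)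
        have hxi' : x' (σ i) = 0 := hx'pos _ (by rw [hxi]; exact hc0)
        rw [hxi, hxi']
        simp only [zero_mul_ind, sub_self, sub_zero]
        rw [if_neg (by omega)]
      · by_cases h2 : (i : ℕ) < t
        · have hxle : x (σ i) ≤ c := (hPt i).mpr h2
          have hxge : ¬ x (σ i) < c := by rw [hPt0 i]; omega
          push_neg at hxge
          have hxi : x (σ i) = c := le_antisymm hxle hxge
          have hxi' : x' (σ i) = 0 := hx'pos _ hxle
          rw [hxi, hxi']
          simp only [zero_mul_ind, sub_self, sub_zero]
          rw [if_pos (by omega)]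
        · have hxgt : ¬ x (σ i) ≤ c := by rw [hPt i]; omega
          rw [hx'gt _ hxgt]
          rw [if_neg (by omega)]
          ring
    have hsum : (∑ i : Fin n,
        (f (fun j => x (σ i) * ind (Aup σ (i : ℕ)) j) -
         f (fun j => x (σ i) * ind (Aup σ ((i : ℕ) + 1)) j))) -
        (∑ i : Fin n,
        (f (fun j => x' (σ i) * ind (Aup σ (i : ℕ)) j) -
         f (fun j => x' (σ i) * ind (Aup σ ((i : ℕ) + 1)) j)))
        = G t0 - G t := by
      rw [← Finset.sum_sub_distrib]
      rw [Finset.sum_congr rfl (fun i _ => hterm i)]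
      rw [Fin.sum_univ_eq_sum_range (fun i => if t0 ≤ i ∧ i < t then G i - G (i + 1) else 0) n]
      have hfilter : (Finset.range n).filter (fun i => t0 ≤ i ∧ i < t) = Finset.Ico t0 t := by
        ext a
        simp only [Finset.mem_filter, Finset.mem_range, Finset.mem_Ico]
        omega
      rw [← Finset.sum_filter, hfilter, Finset.sum_Ico_eq_sum_range]
      have := Finset.sum_range_sub' (fun i => G (t0 + i)) (t - t0)
      rw [show (∑ i ∈ Finset.range (t - t0), (G (t0 + i) - G (t0 + i + 1)))
          = (∑ i ∈ Finset.range (t - t0), ((fun i => G (t0 + i)) i - (fun i => G (t0 + i)) (i+1)))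
          from Finset.sum_congr rfl (fun i _ => by simp [Nat.add_assoc]), this]
      rw [Nat.add_zero, Nat.add_sub_cancel' ht0t]
    rw [hinv', hIH]
    linarith [hsum]



lemma L1 {n : ℕ} (I : Set ℝ) (hI : I.OrdConnected) (h0 : (0 : ℝ) ∈ I)
    (hIpos : I ⊆ Set.Ici (0 : ℝ)) (f : (Fin n → ℝ) → ℝ) (hmod : ComonModular I f) :
    InvHMin I f := by
  intro x hxI c hcI
  have hx0 : ∀ i, 0 ≤ x i := fun i => hIpos (hxI i)
  have hc0 : (0:ℝ) ≤ c := hIpos hcI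
  set σ := Tuple.sort x with hσ
  have hxs : inRσ σ x := fun i j hij => Tuple.monotone_sort x hij
  set u := fun i => min (x i) c with hu
  set v := fun i => if x i ≤ c then 0 else x i with hv
  have huI : ∀ i, u i ∈ I := by
    intro i
    have h1 : (0:ℝ) ≤ u i := le_min (hx0 i) hc0
    have h2 : u i ≤ x i := min_le_left _ _
    exact hI.out h0 (hxI i) ⟨h1, h2⟩
  have hvI : ∀ i, v i ∈ I := by
    intro i; rw [hv]; dsimp only; split <;> [exact h0; exact hxI i]
  have hus : inRσ σ u := fun i j hij => min_le_min (hxs i j hij) le_rfl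
  have hvs : inRσ σ v := by
    intro i j hij
    rw [hv]; dsimp only
    split
    · split
      · exact le_rfl
      · next h2 => push_neg at h2; linarith
    · next h1 =>
      split
      · next h2 => exact absurd (le_trans (hxs i j hij) h2) h1
      · exact hxs i j hij
  have hmin : (fun i => min (u i) (v i)) = (fun i => min (if x i ≤ c then 0 else x i) c) := by
    funext i
    rw [hu, hv]; dsimp only
    by_cases h : x i ≤ c
    · rw [if_pos h, min_eq_left h, min_eq_right (hx0 i), min_eq_left hc0]
    · push_neg at h
      rw [if_neg (not_le.mpr h), min_eq_right h.le, min_eq_left h.le]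
  have hmax : (fun i => max (u i) (v i)) = x := by
    funext i
    rw [hu, hv]; dsimp only
    by_cases h : x i ≤ c
    · rw [if_pos h, min_eq_left h, max_eq_left (hx0 i)]
    · push_neg at h
      rw [if_neg (not_le.mpr h), min_eq_right h.le, max_eq_right h.le]
  have := hmod σ u v huI hvI hus hvs
  rw [hmin, hmax] at this
  linarith

lemma L3 {n : ℕ} (I : Set ℝ) (f g : (Fin n → ℝ) → ℝ)
    (hg : ∀ σ : Equiv.Perm (Fin n), ∀ x : Fin n → ℝ, (∀ i, x i ∈ I) → inRσ σ x →
        f x = g (fun _ => 0) + ∑ i : Fin n,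
          (g (fun j => x (σ i) * ind (Aup σ (i : ℕ)) j) -
           g (fun j => x (σ i) * ind (Aup σ ((i : ℕ) + 1)) j))) :
    ComonModular I f := by
  intro σ x y hxI hyI hxs hys
  set z := fun i => min (x i) (y i) with hz
  set w := fun i => max (x i) (y i) with hw
  have hzI : ∀ i, z i ∈ I := by
    intro i; rcases min_choice (x i) (y i) with h | h <;> rw [hz] <;> dsimp only <;> rw [h]
    exacts [hxI i, hyI i]
  have hwI : ∀ i, w i ∈ I := by
    intro i; rcases max_choice (x i) (y i) with h | h <;> rw [hw] <;> dsimp only <;> rw [h]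
    exacts [hxI i, hyI i]
  have hzs : inRσ σ z := fun i j hij => min_le_min (hxs i j hij) (hys i j hij)
  have hws : inRσ σ w := fun i j hij => max_le_max (hxs i j hij) (hys i j hij)
  rw [hg σ x hxI hxs, hg σ y hyI hys, hg σ z hzI hzs, hg σ w hwI hws]
  have hterm : ∀ i : Fin n,
      ((g (fun j => z (σ i) * ind (Aup σ (i : ℕ)) j) -
        g (fun j => z (σ i) * ind (Aup σ ((i : ℕ) + 1)) j)) +
       (g (fun j => w (σ i) * ind (Aup σ (i : ℕ)) j) -
        g (fun j => w (σ i) * ind (Aup σ ((i : ℕ) + 1)) j)))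
      = ((g (fun j => x (σ i) * ind (Aup σ (i : ℕ)) j) -
        g (fun j => x (σ i) * ind (Aup σ ((i : ℕ) + 1)) j)) +
       (g (fun j => y (σ i) * ind (Aup σ (i : ℕ)) j) -
        g (fun j => y (σ i) * ind (Aup σ ((i : ℕ) + 1)) j))) := by
    intro i
    rcases le_total (x (σ i)) (y (σ i)) with h | h
    · have h1 : z (σ i) = x (σ i) := min_eq_left h
      have h2 : w (σ i) = y (σ i) := max_eq_right h
      rw [h1, h2]
    · have h1 : z (σ i) = y (σ i) := min_eq_right h
      have h2 : w (σ i) = x (σ i) := max_eq_left h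
      rw [h1, h2]; ring
  have hsum : (∑ i : Fin n,
      (g (fun j => z (σ i) * ind (Aup σ (i : ℕ)) j) -
       g (fun j => z (σ i) * ind (Aup σ ((i : ℕ) + 1)) j))) +
      (∑ i : Fin n,
      (g (fun j => w (σ i) * ind (Aup σ (i : ℕ)) j) -
       g (fun j => w (σ i) * ind (Aup σ ((i : ℕ) + 1)) j)))
      = (∑ i : Fin n,
      (g (fun j => x (σ i) * ind (Aup σ (i : ℕ)) j) -
       g (fun j => x (σ i) * ind (Aup σ ((i : ℕ) + 1)) j))) +
      (∑ i : Fin n,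
      (g (fun j => y (σ i) * ind (Aup σ (i : ℕ)) j) -
       g (fun j => y (σ i) * ind (Aup σ ((i : ℕ) + 1)) j))) := by
    rw [← Finset.sum_add_distrib, ← Finset.sum_add_distrib]
    exact Finset.sum_congr rfl (fun i _ => hterm i)
  linarith

/-- For `I ⊆ ℝ₊` an interval containing `0` and `f : Iⁿ → ℝ`, TFAE:
(i) `f` is comonotonically modular; (ii) `f` is invariant under horizontal
min-differences; (iii) there is `g : Iⁿ → ℝ` with
`f(x) = g(0) + Σᵢ (g(x_{σ(i)}·1_{A_σ^↑(i)}) − g(x_{σ(i)}·1_{A_σ^↑(i+1)}))` on each `Iⁿ_σ`;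
moreover, in (iii) one can choose `g = f`. -/
theorem stmt9 {n : ℕ} (I : Set ℝ) (hI : I.OrdConnected) (h0 : (0 : ℝ) ∈ I)
    (hIpos : I ⊆ Set.Ici (0 : ℝ)) (f : (Fin n → ℝ) → ℝ) :
    (ComonModular I f ↔ InvHMin I f) ∧
    (ComonModular I f ↔ ∃ g : (Fin n → ℝ) → ℝ,
      ∀ σ : Equiv.Perm (Fin n), ∀ x : Fin n → ℝ, (∀ i, x i ∈ I) → inRσ σ x →
        f x = g (fun _ => 0) + ∑ i : Fin n,
          (g (fun j => x (σ i) * ind (Aup σ (i : ℕ)) j) -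
           g (fun j => x (σ i) * ind (Aup σ ((i : ℕ) + 1)) j))) ∧
    (ComonModular I f →
      ∀ σ : Equiv.Perm (Fin n), ∀ x : Fin n → ℝ, (∀ i, x i ∈ I) → inRσ σ x →
        f x = f (fun _ => 0) + ∑ i : Fin n,
          (f (fun j => x (σ i) * ind (Aup σ (i : ℕ)) j) -
           f (fun j => x (σ i) * ind (Aup σ ((i : ℕ) + 1)) j))) := by
  have hL1 := L1 I hI h0 hIpos f
  have hL2 := fun h => L2 I h0 hIpos f h
  refine ⟨⟨hL1, fun h => L3 I f f (hL2 h)⟩,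
    ⟨fun h => ⟨f, hL2 (hL1 h)⟩, fun ⟨g, hg⟩ => L3 I f g hg⟩,
    fun h => hL2 (hL1 h)⟩
end
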